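/- arXiv:1206.1372 — 3 statements merged into one kernel-verified Lean document; each statement's English description precedes it below -/
import Mathlib

section
/- Let U ⊆ ℝⁿ be open, g : U → (ℝⁿ →ₗ ℝⁿ →ₗ ℝ) a smooth map with each g(q) a symmetric nondegenerate bilinear form, with Christoffel symbols Γˡ_{ij}, and let T(q,v) = (1/2) g(q)(v,v) be the kinetic energy on U × ℝⁿ. Let α : U × ℝⁿ → (ℝⁿ)* be a horizontal 1-form and let D(q,v) = (v, f(q,v)) be the associated Newton field, i.e. fˡ(q,v) = −( Σ_k g^{lk}(q) α_k(q,v) + Σ_{i,j} Γˡ_{ij}(q) vⁱ vʲ ). Then for every (q,v) ∈ U × ℝⁿ, the derivative of T along D satisfies (D T)(q,v) := (fderiv T (q,v))(v, f(q,v)) = −α(q,v)(v). -/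
/-- The `i`-th standard basis vector of `ℝⁿ`. -/
noncomputable def basisVec {n : ℕ} (i : Fin n) : Fin n → ℝ := Pi.single i 1

/-- The Christoffel symbols `Γˡ_{ij}(q) = (1/2) Σ_k g^{lk}(q) (∂_i g_{jk} + ∂_j g_{ik} − ∂_k g_{ij})(q)`
of a metric `g` with inverse coefficients `ginv`. -/
noncomputable def christoffel {n : ℕ}
    (g : (Fin n → ℝ) → ((Fin n → ℝ) →L[ℝ] (Fin n → ℝ) →L[ℝ] ℝ))
    (ginv : (Fin n → ℝ) → Fin n → Fin n → ℝ)
    (l i j : Fin n) (q : Fin n → ℝ) : ℝ :=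
  (1/2) * ∑ k, ginv q l k *
    (fderiv ℝ (fun p => g p (basisVec j) (basisVec k)) q (basisVec i)
      + fderiv ℝ (fun p => g p (basisVec i) (basisVec k)) q (basisVec j)
      - fderiv ℝ (fun p => g p (basisVec i) (basisVec j)) q (basisVec k))

/-- The kinetic energy `T(q,v) = (1/2) g(q)(v,v)` on `U × ℝⁿ`. -/
noncomputable def kineticEnergy {n : ℕ}
    (g : (Fin n → ℝ) → ((Fin n → ℝ) →L[ℝ] (Fin n → ℝ) →L[ℝ] ℝ)) :
    (Fin n → ℝ) × (Fin n → ℝ) → ℝ :=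
  fun p => (1/2) * g p.1 p.2 p.2

section helpers
variable {n : ℕ}

lemma expand_clm {M : Type*} [AddCommGroup M] [Module ℝ M] [TopologicalSpace M]
    [IsTopologicalAddGroup M] [ContinuousSMul ℝ M]
    (L : (Fin n → ℝ) →L[ℝ] M) (v : Fin n → ℝ) :
    L v = ∑ i, v i • L (basisVec i) := by
  have hv : v = ∑ i, v i • basisVec i := by
    funext j
    simp [basisVec, Pi.single_apply, Finset.sum_apply]
  conv_lhs => rw [hv]
  simp

lemma expand2 (B : (Fin n → ℝ) →L[ℝ] (Fin n → ℝ) →L[ℝ] ℝ) (u w : Fin n → ℝ) :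
    B u w = ∑ i, ∑ j, u i * w j * B (basisVec i) (basisVec j) := by
  rw [expand_clm B u]
  simp only [ContinuousLinearMap.coe_sum', Finset.sum_apply, ContinuousLinearMap.coe_smul',
    Pi.smul_apply, smul_eq_mul]
  refine Finset.sum_congr rfl fun i _ => ?_
  rw [expand_clm (B (basisVec i)) w, Finset.mul_sum]
  exact Finset.sum_congr rfl fun j _ => by rw [smul_eq_mul]; ring

lemma expand3 (G : (Fin n → ℝ) →L[ℝ] (Fin n → ℝ) →L[ℝ] (Fin n → ℝ) →L[ℝ] ℝ)
    (u w x : Fin n → ℝ) :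
    G u w x = ∑ i, ∑ j, ∑ k, u i * w j * x k * G (basisVec i) (basisVec j) (basisVec k) := by
  rw [expand_clm (M := (Fin n → ℝ) →L[ℝ] (Fin n → ℝ) →L[ℝ] ℝ) G u]
  simp only [ContinuousLinearMap.coe_sum', Finset.sum_apply, ContinuousLinearMap.coe_smul',
    Pi.smul_apply, smul_eq_mul]
  refine Finset.sum_congr rfl fun i _ => ?_
  rw [expand2 (G (basisVec i)) w x, Finset.mul_sum]
  refine Finset.sum_congr rfl fun j _ => ?_
  rw [Finset.mul_sum]
  exact Finset.sum_congr rfl fun k _ => by ring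

lemma expand1 (L : (Fin n → ℝ) →L[ℝ] ℝ) (v : Fin n → ℝ) :
    L v = ∑ i, v i * L (basisVec i) := by
  rw [expand_clm L v]
  exact Finset.sum_congr rfl fun i _ => by rw [smul_eq_mul]

lemma coeff_lemma (g : (Fin n → ℝ) → ((Fin n → ℝ) →L[ℝ] (Fin n → ℝ) →L[ℝ] ℝ))
    (q : Fin n → ℝ) (hg : DifferentiableAt ℝ g q) (u w x : Fin n → ℝ) :
    fderiv ℝ (fun p => g p u w) q x = fderiv ℝ g q x u w := by
  have h : HasFDerivAt (fun p => g p u w)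
      (((ContinuousLinearMap.apply ℝ ℝ w).comp
        ((ContinuousLinearMap.apply ℝ ((Fin n → ℝ) →L[ℝ] ℝ) u))).comp (fderiv ℝ g q)) q := by
    exact (((ContinuousLinearMap.apply ℝ ℝ w).hasFDerivAt).comp q
      (((ContinuousLinearMap.apply ℝ ((Fin n → ℝ) →L[ℝ] ℝ) u).hasFDerivAt).comp q hg.hasFDerivAt (f := g)))
  rw [h.fderiv]
  rfl

lemma swap12 (f : Fin n → Fin n → Fin n → ℝ) :
    (∑ a, ∑ b, ∑ c, f a b c) = ∑ b, ∑ a, ∑ c, f a b c := Finset.sum_comm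

lemma swap23 (f : Fin n → Fin n → Fin n → ℝ) :
    (∑ a, ∑ b, ∑ c, f a b c) = ∑ a, ∑ c, ∑ b, f a b c :=
  Finset.sum_congr rfl fun _ _ => Finset.sum_comm

lemma congr3 {f h : Fin n → Fin n → Fin n → ℝ} (e : ∀ a b c, f a b c = h a b c) :
    (∑ a, ∑ b, ∑ c, f a b c) = ∑ a, ∑ b, ∑ c, h a b c :=
  Finset.sum_congr rfl fun a _ => Finset.sum_congr rfl fun b _ =>
    Finset.sum_congr rfl fun c _ => e a b c

lemma key_algebra (v A : Fin n → ℝ) (bb gi : Fin n → Fin n → ℝ)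
    (dg : Fin n → Fin n → Fin n → ℝ)
    (hdelta : ∀ m k, (∑ l, bb m l * gi l k) = if m = k then 1 else 0) :
    (∑ m, ∑ l, v m *
      (-((∑ k, gi l k * A k)
        + ∑ i, ∑ j, ((1/2) * ∑ k, gi l k * (dg i j k + dg j i k - dg k i j)) * v i * v j))
      * bb m l)
    + (1/2) * (∑ i, ∑ j, ∑ k, v i * v j * v k * dg i j k)
    = -∑ m, v m * A m := by
  set S2 := ∑ i, ∑ j, ∑ k, (1/2) * v i * v j * v k * dg i j k with hS2
  have hS : (1/2) * (∑ i, ∑ j, ∑ k, v i * v j * v k * dg i j k) = S2 := by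
    rw [hS2]
    simp only [Finset.mul_sum]
    exact congr3 fun i j k => by ring
  have part1 : (∑ m, ∑ l, v m * bb m l * ∑ k, gi l k * A k) = ∑ m, v m * A m := by
    refine Finset.sum_congr rfl fun m _ => ?_
    have : (∑ l, v m * bb m l * ∑ k, gi l k * A k)
        = ∑ k, (∑ l, bb m l * gi l k) * (v m * A k) := by
      simp only [Finset.mul_sum, Finset.sum_mul]
      rw [Finset.sum_comm]
      exact Finset.sum_congr rfl fun k _ => Finset.sum_congr rfl fun l _ => by ring
    rw [this]
    simp [hdelta]
  have part2 : (∑ m, ∑ l, v m * bb m l *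
      ∑ i, ∑ j, ((1/2) * ∑ k, gi l k * (dg i j k + dg j i k - dg k i j)) * v i * v j)
      = S2 := by
    have step1 : ∀ m, (∑ l, v m * bb m l *
        ∑ i, ∑ j, ((1/2) * ∑ k, gi l k * (dg i j k + dg j i k - dg k i j)) * v i * v j)
        = ∑ i, ∑ j, (1/2) * v m * v i * v j * (dg i j m + dg j i m - dg m i j) := by
      intro m
      have inner : ∀ i j, (∑ l, v m * bb m l *
          (((1/2) * ∑ k, gi l k * (dg i j k + dg j i k - dg k i j)) * v i * v j))
          = (1/2) * v m * v i * v j * (dg i j m + dg j i m - dg m i j) := by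
        intro i j
        have : (∑ l, v m * bb m l *
            (((1/2) * ∑ k, gi l k * (dg i j k + dg j i k - dg k i j)) * v i * v j))
            = ∑ k, (∑ l, bb m l * gi l k) *
                ((1/2) * v m * v i * v j * (dg i j k + dg j i k - dg k i j)) := by
          simp only [Finset.mul_sum, Finset.sum_mul]
          rw [Finset.sum_comm]
          exact Finset.sum_congr rfl fun k _ => Finset.sum_congr rfl fun l _ => by ring
        rw [this]
        simp [hdelta]
      calc (∑ l, v m * bb m l *
            ∑ i, ∑ j, ((1/2) * ∑ k, gi l k * (dg i j k + dg j i k - dg k i j)) * v i * v j)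
          = ∑ l, ∑ i, ∑ j, v m * bb m l *
              (((1/2) * ∑ k, gi l k * (dg i j k + dg j i k - dg k i j)) * v i * v j) := by
            refine Finset.sum_congr rfl fun l _ => ?_
            rw [Finset.mul_sum]
            refine Finset.sum_congr rfl fun i _ => ?_
            rw [Finset.mul_sum]
        _ = ∑ i, ∑ j, ∑ l, v m * bb m l *
              (((1/2) * ∑ k, gi l k * (dg i j k + dg j i k - dg k i j)) * v i * v j) := by
            rw [swap12]
            exact Finset.sum_congr rfl fun i _ => Finset.sum_comm
        _ = ∑ i, ∑ j, (1/2) * v m * v i * v j * (dg i j m + dg j i m - dg m i j) :=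
            Finset.sum_congr rfl fun i _ => Finset.sum_congr rfl fun j _ => inner i j
    have e1 : (∑ m, ∑ i, ∑ j, (1/2) * v m * v i * v j * dg i j m) = S2 := by
      rw [swap12 (fun m i j => (1/2) * v m * v i * v j * dg i j m)]
      rw [swap23 (fun i m j => (1/2) * v m * v i * v j * dg i j m)]
      exact congr3 fun i j m => by ring
    have e2 : (∑ m, ∑ i, ∑ j, (1/2) * v m * v i * v j * dg j i m) = S2 := by
      rw [swap12 (fun m i j => (1/2) * v m * v i * v j * dg j i m)]
      rw [swap23 (fun i m j => (1/2) * v m * v i * v j * dg j i m)]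
      rw [swap12 (fun i j m => (1/2) * v m * v i * v j * dg j i m)]
      exact congr3 fun j i m => by ring
    have e3 : (∑ m, ∑ i, ∑ j, (1/2) * v m * v i * v j * dg m i j) = S2 :=
      congr3 fun m i j => by ring
    calc (∑ m, ∑ l, v m * bb m l *
          ∑ i, ∑ j, ((1/2) * ∑ k, gi l k * (dg i j k + dg j i k - dg k i j)) * v i * v j)
        = ∑ m, ∑ i, ∑ j, (1/2) * v m * v i * v j * (dg i j m + dg j i m - dg m i j) :=
          Finset.sum_congr rfl fun m _ => step1 m
      _ = (∑ m, ∑ i, ∑ j, (1/2) * v m * v i * v j * dg i j m)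
          + (∑ m, ∑ i, ∑ j, (1/2) * v m * v i * v j * dg j i m)
          - (∑ m, ∑ i, ∑ j, (1/2) * v m * v i * v j * dg m i j) := by
          simp only [mul_add, mul_sub, Finset.sum_add_distrib, Finset.sum_sub_distrib]
      _ = S2 := by rw [e1, e2, e3]; ring
  have expand : (∑ m, ∑ l, v m *
      (-((∑ k, gi l k * A k)
        + ∑ i, ∑ j, ((1/2) * ∑ k, gi l k * (dg i j k + dg j i k - dg k i j)) * v i * v j))
      * bb m l)
      = -((∑ m, ∑ l, v m * bb m l * ∑ k, gi l k * A k)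
        + (∑ m, ∑ l, v m * bb m l *
          ∑ i, ∑ j, ((1/2) * ∑ k, gi l k * (dg i j k + dg j i k - dg k i j)) * v i * v j)) := by
    calc (∑ m, ∑ l, v m *
        (-((∑ k, gi l k * A k)
          + ∑ i, ∑ j, ((1/2) * ∑ k, gi l k * (dg i j k + dg j i k - dg k i j)) * v i * v j))
        * bb m l)
        = ∑ m, ∑ l, -((v m * bb m l * ∑ k, gi l k * A k)
            + (v m * bb m l *
              ∑ i, ∑ j, ((1/2) * ∑ k, gi l k * (dg i j k + dg j i k - dg k i j)) * v i * v j)) := by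
          refine Finset.sum_congr rfl fun m _ => Finset.sum_congr rfl fun l _ => by ring
      _ = -(∑ m, ∑ l, ((v m * bb m l * ∑ k, gi l k * A k)
            + (v m * bb m l *
              ∑ i, ∑ j, ((1/2) * ∑ k, gi l k * (dg i j k + dg j i k - dg k i j)) * v i * v j))) := by
          simp only [Finset.sum_neg_distrib]
      _ = _ := by rw [← Finset.sum_add_distrib]
                  exact congrArg _ (Finset.sum_congr rfl fun m _ => Finset.sum_add_distrib)
  rw [expand, part1, part2, hS]
  ring

end helpers

lemma deriv_T {n : ℕ} (g : (Fin n → ℝ) → ((Fin n → ℝ) →L[ℝ] (Fin n → ℝ) →L[ℝ] ℝ))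
    (q v w a : Fin n → ℝ) (hg : DifferentiableAt ℝ g q) :
    fderiv ℝ (kineticEnergy g) (q, v) (w, a)
      = (1/2) * (fderiv ℝ g q w v v + g q a v + g q v a) := by
  have h1 : HasFDerivAt (fun p : (Fin n → ℝ) × (Fin n → ℝ) => g p.1)
      ((fderiv ℝ g q).comp (ContinuousLinearMap.fst ℝ _ _)) (q, v) :=
    HasFDerivAt.comp (g := g) (f := Prod.fst) (q, v) hg.hasFDerivAt
      (hasFDerivAt_fst (𝕜 := ℝ) (E := Fin n → ℝ) (F := Fin n → ℝ))
  have h2 := h1.clm_apply hasFDerivAt_snd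
  have h3 := h2.clm_apply hasFDerivAt_snd
  have h4 := h3.const_mul (1/2 : ℝ)
  have h5 : HasFDerivAt (kineticEnergy g) _ (q, v) := h4
  rw [h5.fderiv]
  simp
  ring


/-- For the Newton field `D(q,v) = (v, f(q,v))` of the mechanical system
`(U, g, α)`, the derivative of the kinetic energy `T` along `D` satisfies
`D T = −α̇`, i.e. `(fderiv T (q,v))(v, f(q,v)) = −α(q,v)(v)` on `U × ℝⁿ`. -/
theorem DT_eq_neg_alpha_dot {n : ℕ} (U : Set (Fin n → ℝ)) (hU : IsOpen U)
    (g : (Fin n → ℝ) → ((Fin n → ℝ) →L[ℝ] (Fin n → ℝ) →L[ℝ] ℝ))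
    (hg : ContDiffOn ℝ (⊤ : ℕ∞) g U)
    (hsymm : ∀ q ∈ U, ∀ u w : Fin n → ℝ, g q u w = g q w u)
    (hnondeg : ∀ q ∈ U, ∀ u : Fin n → ℝ, (∀ w, g q u w = 0) → u = 0)
    (ginv : (Fin n → ℝ) → Fin n → Fin n → ℝ)
    (hginv : ∀ q ∈ U, ∀ i j : Fin n,
      (∑ k, g q (basisVec i) (basisVec k) * ginv q k j) = if i = j then 1 else 0)
    (α : (Fin n → ℝ) × (Fin n → ℝ) → ((Fin n → ℝ) →L[ℝ] ℝ))
    (f : (Fin n → ℝ) × (Fin n → ℝ) → (Fin n → ℝ))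
    (hf : ∀ q ∈ U, ∀ (v : Fin n → ℝ) (l : Fin n),
      f (q, v) l = -((∑ k, ginv q l k * α (q, v) (basisVec k))
        + ∑ i, ∑ j, christoffel g ginv l i j q * v i * v j)) :
    ∀ q ∈ U, ∀ v : Fin n → ℝ,
      fderiv ℝ (kineticEnergy g) (q, v) (v, f (q, v)) = -(α (q, v) v) := by
  intro q hq v
  have hgd : DifferentiableAt ℝ g q :=
    (hg.differentiableOn (by simp)).differentiableAt (hU.mem_nhds hq)
  set a := f (q, v) with ha_def
  set dg : Fin n → Fin n → Fin n → ℝ :=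
    fun i j k => fderiv ℝ g q (basisVec i) (basisVec j) (basisVec k) with hdg
  have hch : ∀ l i j, christoffel g ginv l i j q
      = (1/2) * ∑ k, ginv q l k * (dg i j k + dg j i k - dg k i j) := by
    intro l i j
    unfold christoffel
    refine congrArg _ (Finset.sum_congr rfl fun k _ => ?_)
    rw [coeff_lemma g q hgd, coeff_lemma g q hgd, coeff_lemma g q hgd, hdg]
  have ha : ∀ l, a l = -((∑ k, ginv q l k * α (q, v) (basisVec k))
      + ∑ i, ∑ j, ((1/2) * ∑ k, ginv q l k * (dg i j k + dg j i k - dg k i j)) * v i * v j) := by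
    intro l
    rw [ha_def, hf q hq v l]
    simp only [hch]
  rw [deriv_T g q v v a hgd, hsymm q hq a v]
  have key : g q v a + (1/2) * (fderiv ℝ g q v v v) = -(α (q, v) v) := by
    rw [expand2 (g q) v a, expand3 (fderiv ℝ g q) v v v, expand1 (α (q, v)) v]
    have hBva : (∑ m, ∑ l, v m * a l * g q (basisVec m) (basisVec l))
        = ∑ m, ∑ l, v m *
          (-((∑ k, ginv q l k * α (q, v) (basisVec k))
            + ∑ i, ∑ j, ((1/2) * ∑ k, ginv q l k * (dg i j k + dg j i k - dg k i j)) * v i * v j))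
          * g q (basisVec m) (basisVec l) := by
      refine Finset.sum_congr rfl fun m _ => Finset.sum_congr rfl fun l _ => ?_
      rw [ha l]
    rw [hBva]
    exact key_algebra v (fun k => α (q, v) (basisVec k))
      (fun m l => g q (basisVec m) (basisVec l)) (fun l k => ginv q l k) dg
      (fun m k => hginv q hq m k)
  calc (1/2) * (fderiv ℝ g q v v v + g q v a + g q v a)
      = g q v a + (1/2) * (fderiv ℝ g q v v v) := by ring
    _ = -(α (q, v) v) := key
end

section
/- Let U ⊆ ℝⁿ be open, g : U → (ℝⁿ →ₗ ℝⁿ →ₗ ℝ) a smooth map with each g(q) a symmetric nondegenerate bilinear form, with Christoffel symbols Γˡ_{ij}, and kinetic energy T(q,v) = (1/2) g(q)(v,v). Let α : U × ℝⁿ → (ℝⁿ)* be a horizontal 1-form and D(q,v) = (v, f(q,v)) the associated Newton field, fˡ(q,v) = −( Σ_k g^{lk}(q) α_k(q,v) + Σ_{i,j} Γˡ_{ij}(q) vⁱ vʲ ). Then D is a relativistic field, i.e. (fderiv T (q,v))(v, f(q,v)) = 0 for all (q,v) ∈ U × ℝⁿ, if and only if α is a contact form, i.e. α(q,v)(v)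 = 0 for all (q,v) ∈ U × ℝⁿ. -/
lemma sum_smul_basis {n : ℕ} (w : Fin n → ℝ) : ∑ b, w b • basisVec b = w := by
  funext j
  simp [basisVec, Pi.single_apply, Finset.sum_ite_eq]

lemma clm_expand {n : ℕ} {M : Type*} [AddCommGroup M] [Module ℝ M] [TopologicalSpace M]
    (φ : (Fin n → ℝ) →L[ℝ] M) (w : Fin n → ℝ) : φ w = ∑ b, w b • φ (basisVec b) := by
  conv_lhs => rw [← sum_smul_basis w]
  simp [map_sum]

lemma bilin_expand {n : ℕ} (B : (Fin n → ℝ) →L[ℝ] (Fin n → ℝ) →L[ℝ] ℝ) (v w : Fin n → ℝ) :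
    B v w = ∑ a, ∑ b, v a * w b * B (basisVec a) (basisVec b) := by
  rw [clm_expand (M := (Fin n → ℝ) →L[ℝ] ℝ) B v]
  simp only [ContinuousLinearMap.coe_sum', Finset.sum_apply, ContinuousLinearMap.coe_smul',
    Pi.smul_apply, smul_eq_mul]
  refine Finset.sum_congr rfl fun a _ => ?_
  rw [clm_expand (B (basisVec a)) w, Finset.mul_sum]
  refine Finset.sum_congr rfl fun b _ => ?_
  rw [smul_eq_mul]; ring

lemma trilin_expand {n : ℕ} (T : (Fin n → ℝ) →L[ℝ] (Fin n → ℝ) →L[ℝ] (Fin n → ℝ) →L[ℝ] ℝ)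
    (v : Fin n → ℝ) :
    T v v v = ∑ a, ∑ b, ∑ c, v a * v b * v c *
      T (basisVec a) (basisVec b) (basisVec c) := by
  rw [clm_expand (M := (Fin n → ℝ) →L[ℝ] (Fin n → ℝ) →L[ℝ] ℝ) T v]
  simp only [ContinuousLinearMap.coe_sum', Finset.sum_apply, ContinuousLinearMap.coe_smul',
    Pi.smul_apply, smul_eq_mul]
  refine Finset.sum_congr rfl fun a _ => ?_
  rw [bilin_expand (T (basisVec a)) v v, Finset.mul_sum]
  refine Finset.sum_congr rfl fun b _ => ?_
  rw [Finset.mul_sum]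
  refine Finset.sum_congr rfl fun c _ => ?_
  ring

lemma kinetic_fderiv {n : ℕ} {U : Set (Fin n → ℝ)} (hU : IsOpen U)
    {g : (Fin n → ℝ) → ((Fin n → ℝ) →L[ℝ] (Fin n → ℝ) →L[ℝ] ℝ)}
    (hg : ContDiffOn ℝ (⊤ : ℕ∞) g U) {q : Fin n → ℝ} (hq : q ∈ U) (v w : Fin n → ℝ) :
    fderiv ℝ (kineticEnergy g) (q, v) (v, w)
      = (1/2) * (g q v w + (g q w v + fderiv ℝ g q v v v)) := by
  have hGd : DifferentiableAt ℝ g q :=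
    ((hg.contDiffAt (hU.mem_nhds hq)).differentiableAt (by simp))
  set G := fderiv ℝ g q with hGdef
  have hG : HasFDerivAt g G q := hGd.hasFDerivAt
  have h1 : HasFDerivAt (fun p : (Fin n → ℝ) × (Fin n → ℝ) => g p.1)
      (G.comp (ContinuousLinearMap.fst ℝ (Fin n → ℝ) (Fin n → ℝ))) (q, v) :=
    by have := HasFDerivAt.comp (G := (Fin n → ℝ) →L[ℝ] (Fin n → ℝ) →L[ℝ] ℝ) (q, v) hG (hasFDerivAt_fst (𝕜 := ℝ) (p := (q, v))); exact this
  have h2 : HasFDerivAt (fun p : (Fin n → ℝ) × (Fin n → ℝ) => p.2)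
      (ContinuousLinearMap.snd ℝ (Fin n → ℝ) (Fin n → ℝ)) (q, v) := hasFDerivAt_snd
  have h3 := h1.clm_apply h2
  have h4 := h3.clm_apply h2
  have h5 := h4.const_mul (1/2 : ℝ)
  have h6 : fderiv ℝ (kineticEnergy g) (q, v) = _ := h5.fderiv
  rw [h6]
  simp [ContinuousLinearMap.smul_apply, ContinuousLinearMap.add_apply,
    ContinuousLinearMap.comp_apply, ContinuousLinearMap.flip_apply, smul_eq_mul]
  ring

lemma coeff_fderiv {n : ℕ} {g : (Fin n → ℝ) → ((Fin n → ℝ) →L[ℝ] (Fin n → ℝ) →L[ℝ] ℝ)}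
    {q : Fin n → ℝ} {G : (Fin n → ℝ) →L[ℝ] ((Fin n → ℝ) →L[ℝ] (Fin n → ℝ) →L[ℝ] ℝ)}
    (hG : HasFDerivAt g G q) (a b c : Fin n) :
    fderiv ℝ (fun p => g p (basisVec b) (basisVec c)) q (basisVec a)
      = G (basisVec a) (basisVec b) (basisVec c) := by
  have h1 := (hG.clm_apply (hasFDerivAt_const (basisVec b) q)).clm_apply
    (hasFDerivAt_const (basisVec c) q)
  rw [h1.fderiv]
  simp

lemma cyc1 {n : ℕ} (v : Fin n → ℝ) (D : Fin n → Fin n → Fin n → ℝ) :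
    ∑ a, ∑ b, ∑ c, v a * v b * v c * D b c a
      = ∑ a, ∑ b, ∑ c, v a * v b * v c * D a b c := by
  calc ∑ a, ∑ b, ∑ c, v a * v b * v c * D b c a
      = ∑ b, ∑ a, ∑ c, v a * v b * v c * D b c a := Finset.sum_comm
    _ = ∑ b, ∑ c, ∑ a, v a * v b * v c * D b c a :=
        Finset.sum_congr rfl fun _ _ => Finset.sum_comm
    _ = ∑ a, ∑ b, ∑ c, v a * v b * v c * D a b c :=
        Finset.sum_congr rfl fun a _ => Finset.sum_congr rfl fun b _ =>
          Finset.sum_congr rfl fun c _ => by ring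

lemma cyc2 {n : ℕ} (v : Fin n → ℝ) (D : Fin n → Fin n → Fin n → ℝ) :
    ∑ a, ∑ b, ∑ c, v a * v b * v c * D c b a
      = ∑ a, ∑ b, ∑ c, v a * v b * v c * D a b c := by
  calc ∑ a, ∑ b, ∑ c, v a * v b * v c * D c b a
      = ∑ b, ∑ a, ∑ c, v a * v b * v c * D c b a := Finset.sum_comm
    _ = ∑ b, ∑ c, ∑ a, v a * v b * v c * D c b a :=
        Finset.sum_congr rfl fun _ _ => Finset.sum_comm
    _ = ∑ c, ∑ b, ∑ a, v a * v b * v c * D c b a := Finset.sum_comm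
    _ = ∑ a, ∑ b, ∑ c, v a * v b * v c * D a b c :=
        Finset.sum_congr rfl fun a _ => Finset.sum_congr rfl fun b _ =>
          Finset.sum_congr rfl fun c _ => by ring

/-- The Newton field `D(q,v) = (v, f(q,v))` of the mechanical system
`(U, g, α)` is a relativistic field (`D T = 0` everywhere on `U × ℝⁿ`) if and only if
`α` is a contact form (`α(q,v)(v) = 0` everywhere on `U × ℝⁿ`). -/
theorem relativistic_iff_contact {n : ℕ} (U : Set (Fin n → ℝ)) (hU : IsOpen U)
    (g : (Fin n → ℝ) → ((Fin n → ℝ) →L[ℝ] (Fin n → ℝ) →L[ℝ] ℝ))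
    (hg : ContDiffOn ℝ (⊤ : ℕ∞) g U)
    (hsymm : ∀ q ∈ U, ∀ u w : Fin n → ℝ, g q u w = g q w u)
    (hnondeg : ∀ q ∈ U, ∀ u : Fin n → ℝ, (∀ w, g q u w = 0) → u = 0)
    (ginv : (Fin n → ℝ) → Fin n → Fin n → ℝ)
    (hginv : ∀ q ∈ U, ∀ i j : Fin n,
      (∑ k, g q (basisVec i) (basisVec k) * ginv q k j) = if i = j then 1 else 0)
    (α : (Fin n → ℝ) × (Fin n → ℝ) → ((Fin n → ℝ) →L[ℝ] ℝ))
    (f : (Fin n → ℝ) × (Fin n → ℝ) → (Fin n → ℝ))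
    (hf : ∀ q ∈ U, ∀ (v : Fin n → ℝ) (l : Fin n),
      f (q, v) l = -((∑ k, ginv q l k * α (q, v) (basisVec k))
        + ∑ i, ∑ j, christoffel g ginv l i j q * v i * v j)) :
    (∀ q ∈ U, ∀ v : Fin n → ℝ,
      fderiv ℝ (kineticEnergy g) (q, v) (v, f (q, v)) = 0)
    ↔ (∀ q ∈ U, ∀ v : Fin n → ℝ, α (q, v) v = 0) := by
  have key : ∀ q ∈ U, ∀ v : Fin n → ℝ,
      fderiv ℝ (kineticEnergy g) (q, v) (v, f (q, v)) = -(α (q, v) v) := by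
    intro q hq v
    have hGd : DifferentiableAt ℝ g q :=
      ((hg.contDiffAt (hU.mem_nhds hq)).differentiableAt (by simp))
    set G := fderiv ℝ g q with hGdef
    have hG : HasFDerivAt g G q := hGd.hasFDerivAt
    set D : Fin n → Fin n → Fin n → ℝ :=
      fun a b c => G (basisVec a) (basisVec b) (basisVec c) with hD
    -- the trilinear sum
    have hS : G v v v = ∑ a, ∑ b, ∑ c, v a * v b * v c * D a b c := trilin_expand G v
    -- contraction of the metric with the Christoffel symbols
    have hcontr : ∀ a i j : Fin n,
        (∑ b, g q (basisVec a) (basisVec b) * christoffel g ginv b i j q)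
          = (1/2) * (D i j a + D j i a - D a i j) := by
      intro a i j
      have hchris : ∀ b, christoffel g ginv b i j q
          = (1/2) * ∑ k, ginv q b k * (D i j k + D j i k - D k i j) := by
        intro b
        unfold christoffel
        congr 1
        refine Finset.sum_congr rfl fun k _ => ?_
        rw [coeff_fderiv hG i j k, coeff_fderiv hG j i k, coeff_fderiv hG k i j]
      calc (∑ b, g q (basisVec a) (basisVec b) * christoffel g ginv b i j q)
          = ∑ b, ∑ k, (g q (basisVec a) (basisVec b) * ginv q b k)
              * ((1/2) * (D i j k + D j i k - D k i j)) := by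
            refine Finset.sum_congr rfl fun b _ => ?_
            rw [hchris b, Finset.mul_sum, Finset.mul_sum]
            refine Finset.sum_congr rfl fun k _ => by ring
        _ = ∑ k, (∑ b, g q (basisVec a) (basisVec b) * ginv q b k)
              * ((1/2) * (D i j k + D j i k - D k i j)) := by
            rw [Finset.sum_comm]
            exact Finset.sum_congr rfl fun k _ => (Finset.sum_mul _ _ _).symm
        _ = ∑ k, (if a = k then (1:ℝ) else 0)
              * ((1/2) * (D i j k + D j i k - D k i j)) := by
            refine Finset.sum_congr rfl fun k _ => ?_
            rw [hginv q hq a k]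
        _ = (1/2) * (D i j a + D j i a - D a i j) := by
            simp [Finset.sum_ite_eq, ite_mul]
    -- the main identity: g q v (f (q,v)) = -α(q,v)(v) - (1/2) G v v v
    have hA : g q v (f (q, v)) = -(α (q, v) v) - (1/2) * (G v v v) := by
      rw [bilin_expand (g q) v (f (q, v))]
      have split : ∀ a b, v a * f (q, v) b * g q (basisVec a) (basisVec b)
          = -(v a * (∑ k, ginv q b k * α (q, v) (basisVec k))
                * g q (basisVec a) (basisVec b))
            - v a * (∑ i, ∑ j, christoffel g ginv b i j q * v i * v j)
                * g q (basisVec a) (basisVec b) := by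
        intro a b
        rw [hf q hq v b]
        ring
      rw [Finset.sum_congr rfl fun a _ => Finset.sum_congr rfl fun b _ => split a b]
      have hsplit2 : (∑ a, ∑ b,
          (-(v a * (∑ k, ginv q b k * α (q, v) (basisVec k))
              * g q (basisVec a) (basisVec b))
            - v a * (∑ i, ∑ j, christoffel g ginv b i j q * v i * v j)
              * g q (basisVec a) (basisVec b)))
          = -(∑ a, ∑ b, v a * (∑ k, ginv q b k * α (q, v) (basisVec k))
              * g q (basisVec a) (basisVec b))
            - ∑ a, ∑ b, v a * (∑ i, ∑ j, christoffel g ginv b i j q * v i * v j)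
              * g q (basisVec a) (basisVec b) := by
        rw [← Finset.sum_neg_distrib, ← Finset.sum_sub_distrib]
        refine Finset.sum_congr rfl fun a _ => ?_
        rw [← Finset.sum_neg_distrib, ← Finset.sum_sub_distrib]
      rw [hsplit2]
      -- Term 1
      have hT1 : (∑ a, ∑ b, v a * (∑ k, ginv q b k * α (q, v) (basisVec k))
            * g q (basisVec a) (basisVec b)) = α (q, v) v := by
        have inner : ∀ a, (∑ b, v a * (∑ k, ginv q b k * α (q, v) (basisVec k))
              * g q (basisVec a) (basisVec b)) = v a * α (q, v) (basisVec a) := by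
          intro a
          calc (∑ b, v a * (∑ k, ginv q b k * α (q, v) (basisVec k))
                * g q (basisVec a) (basisVec b))
              = ∑ b, ∑ k, (v a * α (q, v) (basisVec k))
                  * (g q (basisVec a) (basisVec b) * ginv q b k) := by
                refine Finset.sum_congr rfl fun b _ => ?_
                rw [Finset.mul_sum, Finset.sum_mul]
                refine Finset.sum_congr rfl fun k _ => by ring
            _ = ∑ k, (v a * α (q, v) (basisVec k))
                  * (∑ b, g q (basisVec a) (basisVec b) * ginv q b k) := by
                rw [Finset.sum_comm]
                exact Finset.sum_congr rfl fun k _ => (Finset.mul_sum _ _ _).symm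
            _ = ∑ k, (v a * α (q, v) (basisVec k)) * (if a = k then 1 else 0) := by
                refine Finset.sum_congr rfl fun k _ => ?_
                rw [hginv q hq a k]
            _ = v a * α (q, v) (basisVec a) := by
                simp [Finset.sum_ite_eq, mul_ite]
        rw [Finset.sum_congr rfl fun a _ => inner a, clm_expand (α (q, v)) v]
        exact Finset.sum_congr rfl fun a _ => by rw [smul_eq_mul]
      -- Term 2
      have hT2 : (∑ a, ∑ b, v a * (∑ i, ∑ j, christoffel g ginv b i j q * v i * v j)
            * g q (basisVec a) (basisVec b)) = (1/2) * (G v v v) := by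
        calc (∑ a, ∑ b, v a * (∑ i, ∑ j, christoffel g ginv b i j q * v i * v j)
              * g q (basisVec a) (basisVec b))
            = ∑ a, ∑ i, ∑ j, (v a * v i * v j)
                * (∑ b, g q (basisVec a) (basisVec b) * christoffel g ginv b i j q) := by
              refine Finset.sum_congr rfl fun a _ => ?_
              calc (∑ b, v a * (∑ i, ∑ j, christoffel g ginv b i j q * v i * v j)
                    * g q (basisVec a) (basisVec b))
                  = ∑ b, ∑ i, ∑ j, (v a * v i * v j)
                      * (g q (basisVec a) (basisVec b) * christoffel g ginv b i j q) := by
                    refine Finset.sum_congr rfl fun b _ => ?_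
                    rw [Finset.mul_sum, Finset.sum_mul]
                    refine Finset.sum_congr rfl fun i _ => ?_
                    rw [Finset.mul_sum, Finset.sum_mul]
                    refine Finset.sum_congr rfl fun j _ => by ring
                _ = ∑ i, ∑ b, ∑ j, (v a * v i * v j)
                      * (g q (basisVec a) (basisVec b) * christoffel g ginv b i j q) :=
                    Finset.sum_comm
                _ = ∑ i, ∑ j, ∑ b, (v a * v i * v j)
                      * (g q (basisVec a) (basisVec b) * christoffel g ginv b i j q) :=
                    Finset.sum_congr rfl fun _ _ => Finset.sum_comm
                _ = ∑ i, ∑ j, (v a * v i * v j)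
                      * (∑ b, g q (basisVec a) (basisVec b)
                          * christoffel g ginv b i j q) := by
                    refine Finset.sum_congr rfl fun i _ => Finset.sum_congr rfl fun j _ => ?_
                    rw [Finset.mul_sum]
          _ = ∑ a, ∑ i, ∑ j, (v a * v i * v j)
                * ((1/2) * (D i j a + D j i a - D a i j)) := by
              exact Finset.sum_congr rfl fun a _ => Finset.sum_congr rfl fun i _ =>
                Finset.sum_congr rfl fun j _ => by rw [hcontr a i j]
          _ = (1/2) * (∑ a, ∑ b, ∑ c, v a * v b * v c * D b c a)
                + (1/2) * (∑ a, ∑ b, ∑ c, v a * v b * v c * D c b a)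
                - (1/2) * (∑ a, ∑ b, ∑ c, v a * v b * v c * D a b c) := by
              simp only [Finset.mul_sum]
              rw [← Finset.sum_add_distrib, ← Finset.sum_sub_distrib]
              refine Finset.sum_congr rfl fun a _ => ?_
              rw [← Finset.sum_add_distrib, ← Finset.sum_sub_distrib]
              refine Finset.sum_congr rfl fun b _ => ?_
              rw [← Finset.sum_add_distrib, ← Finset.sum_sub_distrib]
              refine Finset.sum_congr rfl fun c _ => by ring
          _ = (1/2) * (G v v v) := by
              rw [cyc1 v D, cyc2 v D, hS]
              ring
      rw [hT1, hT2]
    rw [kinetic_fderiv hU hg hq v (f (q, v)), hsymm q hq (f (q, v)) v, hA, ← hGdef]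
    ring
  constructor
  · intro h q hq v
    have := h q hq v
    rw [key q hq v] at this
    linarith
  · intro h q hq v
    rw [key q hq v, h q hq v, neg_zero]
end

section
/- Let U ⊆ ℝⁿ be open, g : U → (ℝⁿ →ₗ ℝⁿ →ₗ ℝ) a smooth map with each g(q) a symmetric nondegenerate bilinear form, with Christoffel symbols Γˡ_{ij}, and let α : U × ℝⁿ → (ℝⁿ)* be a contact form, i.e. α(q,v)(v) = 0 for all (q,v) ∈ U × ℝⁿ. Then every twice-differentiable curve x : I → U (I ⊆ ℝ an open interval) satisfying the Newton equation (x'')ˡ(t) = −( Σ_k g^{lk}(x(t)) α_k(x(t), x'(t)) + Σ_{i,j} Γˡ_{ij}(x(t)) (x')ⁱ(t) (x')ʲ(t) ) has tangent field of constant length: the function t ↦ g(x(t))(x'(t), x'(t)) is constant on I. -/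
lemma sum_single_eq {n : ℕ} (u : Fin n → ℝ) : ∑ i, u i • basisVec i = u := by
  ext j
  simp [basisVec, Pi.single_apply]

lemma clm1_expand {n : ℕ} (L : (Fin n → ℝ) →L[ℝ] ℝ) (u : Fin n → ℝ) :
    L u = ∑ i, u i * L (basisVec i) := by
  conv_lhs => rw [← sum_single_eq u]
  simp [map_sum]

lemma clm2_expand {n : ℕ} (B : (Fin n → ℝ) →L[ℝ] (Fin n → ℝ) →L[ℝ] ℝ) (u w : Fin n → ℝ) :
    B u w = ∑ i, ∑ j, u i * w j * B (basisVec i) (basisVec j) := by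
  conv_lhs => rw [← sum_single_eq u]
  rw [map_sum, ContinuousLinearMap.sum_apply]
  refine Finset.sum_congr rfl fun i _ => ?_
  rw [map_smul, ContinuousLinearMap.smul_apply, smul_eq_mul, clm1_expand (B (basisVec i)) w]
  rw [Finset.mul_sum]
  exact Finset.sum_congr rfl fun j _ => by ring

lemma fderiv_eval {n : ℕ} (g : (Fin n → ℝ) → ((Fin n → ℝ) →L[ℝ] (Fin n → ℝ) →L[ℝ] ℝ))
    (q : Fin n → ℝ) (hgd : DifferentiableAt ℝ g q) (u w z : Fin n → ℝ) :
    fderiv ℝ (fun p => g p u w) q z = fderiv ℝ g q z u w := by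
  have h : HasFDerivAt (fun p => g p u w)
      (((ContinuousLinearMap.apply ℝ ℝ w).comp
        (ContinuousLinearMap.apply ℝ ((Fin n → ℝ) →L[ℝ] ℝ) u)).comp (fderiv ℝ g q)) q := by
    have := (((ContinuousLinearMap.apply ℝ ℝ w).comp
        (ContinuousLinearMap.apply ℝ ((Fin n → ℝ) →L[ℝ] ℝ) u)).hasFDerivAt).comp q (f := g) (f' := fderiv ℝ g q) hgd.hasFDerivAt
    exact this
  rw [h.fderiv]
  rfl


lemma triple_comm {n : ℕ} (f : Fin n → Fin n → Fin n → ℝ) :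
    ∑ m : Fin n, ∑ i : Fin n, ∑ j : Fin n, f m i j
      = ∑ i : Fin n, ∑ j : Fin n, ∑ m : Fin n, f m i j := by
  rw [Finset.sum_comm]
  exact Finset.sum_congr rfl fun i _ => Finset.sum_comm

lemma quad_rotate {n : ℕ} (f : Fin n → Fin n → Fin n → Fin n → ℝ) :
    ∑ l : Fin n, ∑ i : Fin n, ∑ j : Fin n, ∑ k : Fin n, f l i j k
      = ∑ i : Fin n, ∑ j : Fin n, ∑ k : Fin n, ∑ l : Fin n, f l i j k := by
  rw [Finset.sum_comm]
  refine Finset.sum_congr rfl fun i _ => ?_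
  rw [Finset.sum_comm]
  exact Finset.sum_congr rfl fun j _ => Finset.sum_comm

lemma algebra_core {n : ℕ} (G GI : Fin n → Fin n → ℝ) (D : Fin n → Fin n → Fin n → ℝ)
    (A v a : Fin n → ℝ)
    (hsym : ∀ i j, G i j = G j i)
    (hdelta : ∀ m k, (∑ l, G m l * GI l k) = if m = k then 1 else 0)
    (hA : ∑ m, v m * A m = 0)
    (hNewt : ∀ l, a l = -((∑ k, GI l k * A k)
      + ∑ i, ∑ j, ((1/2) * ∑ k, GI l k * (D i j k + D j i k - D k i j)) * v i * v j)) :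
    (∑ m, ∑ i, ∑ j, v m * v i * v j * D m i j)
      + (∑ l, ∑ m, a l * v m * G l m) + (∑ l, ∑ m, a l * v m * G l m) = 0 := by
  have claim1 : (∑ l, ∑ m, (∑ k, GI l k * A k) * v m * G l m) = 0 := by
    rw [Finset.sum_comm]
    have inner : ∀ m : Fin n, (∑ l, (∑ k, GI l k * A k) * v m * G l m) = v m * A m := by
      intro m
      calc ∑ l, (∑ k, GI l k * A k) * v m * G l m
          = ∑ l, ∑ k, (G m l * GI l k) * (A k * v m) := by
            refine Finset.sum_congr rfl fun l _ => ?_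
            rw [Finset.sum_mul, Finset.sum_mul]
            refine Finset.sum_congr rfl fun k _ => ?_
            rw [hsym m l]; ring
        _ = ∑ k, ∑ l, (G m l * GI l k) * (A k * v m) := Finset.sum_comm
        _ = ∑ k, (∑ l, G m l * GI l k) * (A k * v m) := by
            exact Finset.sum_congr rfl fun k _ => (Finset.sum_mul _ _ _).symm
        _ = ∑ k, (if m = k then 1 else 0) * (A k * v m) := by
            exact Finset.sum_congr rfl fun k _ => by rw [hdelta]
        _ = A m * v m := by simp
        _ = v m * A m := mul_comm _ _
    rw [Finset.sum_congr rfl fun m _ => inner m]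
    exact hA
  have claim2 : (∑ l, ∑ m, (∑ i, ∑ j, ((1/2) * ∑ k, GI l k * (D i j k + D j i k - D k i j)) * v i * v j) * v m * G l m)
      = (1/2) * (∑ m, ∑ i, ∑ j, v m * v i * v j * D m i j) := by
    rw [Finset.sum_comm]
    have inner : ∀ m : Fin n,
        (∑ l, (∑ i, ∑ j, ((1/2) * ∑ k, GI l k * (D i j k + D j i k - D k i j)) * v i * v j) * v m * G l m)
          = ∑ i, ∑ j, (1/2) * (D i j m + D j i m - D m i j) * (v i * v j * v m) := by
      intro m
      calc (∑ l, (∑ i, ∑ j, ((1/2) * ∑ k, GI l k * (D i j k + D j i k - D k i j)) * v i * v j) * v m * G l m)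
          = ∑ l, ∑ i, ∑ j, ∑ k, (G m l * GI l k) * ((1/2) * (D i j k + D j i k - D k i j) * (v i * v j * v m)) := by
            refine Finset.sum_congr rfl fun l _ => ?_
            rw [hsym l m]
            simp only [Finset.sum_mul, Finset.mul_sum]
            exact Finset.sum_congr rfl fun i _ => Finset.sum_congr rfl fun j _ =>
              Finset.sum_congr rfl fun k _ => by ring
        _ = ∑ i, ∑ j, ∑ k, ∑ l, (G m l * GI l k) * ((1/2) * (D i j k + D j i k - D k i j) * (v i * v j * v m)) :=
            quad_rotate _
        _ = ∑ i, ∑ j, ∑ k, (if m = k then 1 else 0) * ((1/2) * (D i j k + D j i k - D k i j) * (v i * v j * v m)) := by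
            refine Finset.sum_congr rfl fun i _ => Finset.sum_congr rfl fun j _ =>
              Finset.sum_congr rfl fun k _ => ?_
            rw [← Finset.sum_mul, hdelta]
        _ = ∑ i, ∑ j, (1/2) * (D i j m + D j i m - D m i j) * (v i * v j * v m) := by
            refine Finset.sum_congr rfl fun i _ => Finset.sum_congr rfl fun j _ => ?_
            simp
    rw [Finset.sum_congr rfl fun m _ => inner m]
    -- now : ∑ m, ∑ i, ∑ j, (1/2)*(D i j m + D j i m - D m i j)*(v i * v j * v m) = (1/2) * S
    have split : (∑ m, ∑ i, ∑ j, (1/2) * (D i j m + D j i m - D m i j) * (v i * v j * v m))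
        = (∑ m, ∑ i, ∑ j, (1/2) * (v m * v i * v j * D i j m))
          + (∑ m, ∑ i, ∑ j, (1/2) * (v m * v i * v j * D j i m))
          - (∑ m, ∑ i, ∑ j, (1/2) * (v m * v i * v j * D m i j)) := by
      simp only [← Finset.sum_add_distrib, ← Finset.sum_sub_distrib]
      exact Finset.sum_congr rfl fun m _ => Finset.sum_congr rfl fun i _ =>
        Finset.sum_congr rfl fun j _ => by ring
    rw [split]
    have hS1 : (∑ m, ∑ i, ∑ j, (1/2) * (v m * v i * v j * D i j m))
        = ∑ m, ∑ i, ∑ j, (1/2) * (v m * v i * v j * D m i j) := by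
      rw [triple_comm]
      exact Finset.sum_congr rfl fun i _ => Finset.sum_congr rfl fun j _ =>
        Finset.sum_congr rfl fun m _ => by ring
    have hS2 : (∑ m, ∑ i, ∑ j, (1/2) * (v m * v i * v j * D j i m))
        = ∑ m, ∑ i, ∑ j, (1/2) * (v m * v i * v j * D m i j) := by
      rw [triple_comm, Finset.sum_comm]
      exact Finset.sum_congr rfl fun j _ => Finset.sum_congr rfl fun i _ =>
        Finset.sum_congr rfl fun m _ => by ring
    rw [hS1, hS2]
    simp only [Finset.mul_sum]
    refine ?_
    rw [show ∀ X : ℝ, X + X - X = X from fun X => by ring]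
  have hT : (∑ l, ∑ m, a l * v m * G l m)
      = -((1/2) * (∑ m, ∑ i, ∑ j, v m * v i * v j * D m i j)) := by
    calc ∑ l, ∑ m, a l * v m * G l m
        = ∑ l, ∑ m, (-((∑ k, GI l k * A k) * v m * G l m)
            + -((∑ i, ∑ j, ((1/2) * ∑ k, GI l k * (D i j k + D j i k - D k i j)) * v i * v j) * v m * G l m)) := by
          refine Finset.sum_congr rfl fun l _ => Finset.sum_congr rfl fun m _ => ?_
          rw [hNewt l]; ring
      _ = -(∑ l, ∑ m, (∑ k, GI l k * A k) * v m * G l m)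
          + -(∑ l, ∑ m, (∑ i, ∑ j, ((1/2) * ∑ k, GI l k * (D i j k + D j i k - D k i j)) * v i * v j) * v m * G l m) := by
          simp only [Finset.sum_add_distrib, Finset.sum_neg_distrib]
      _ = -((1/2) * (∑ m, ∑ i, ∑ j, v m * v i * v j * D m i j)) := by
          rw [claim1, claim2]; ring
  rw [hT]; ring


lemma clm3_expand {n : ℕ}
    (T : (Fin n → ℝ) →L[ℝ] (Fin n → ℝ) →L[ℝ] (Fin n → ℝ) →L[ℝ] ℝ) (z u w : Fin n → ℝ) :
    T z u w = ∑ m, ∑ i, ∑ j, z m * u i * w j * T (basisVec m) (basisVec i) (basisVec j) := by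
  conv_lhs => rw [← sum_single_eq z]
  rw [map_sum, ContinuousLinearMap.sum_apply, ContinuousLinearMap.sum_apply]
  refine Finset.sum_congr rfl fun m _ => ?_
  rw [map_smul, ContinuousLinearMap.smul_apply, ContinuousLinearMap.smul_apply, smul_eq_mul,
    clm2_expand (T (basisVec m)) u w, Finset.mul_sum]
  refine Finset.sum_congr rfl fun i _ => ?_
  rw [Finset.mul_sum]
  exact Finset.sum_congr rfl fun j _ => by ring

/-- If `α` is a contact form (`α(q,v)(v) = 0` for all `(q,v) ∈ U × ℝⁿ`),
then every twice-differentiable curve solving the Newton equation of the mechanical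
system `(U, g, α)` has tangent field of constant length: `t ↦ g(x(t))(x'(t), x'(t))`
is constant on `I`. -/
theorem contact_implies_constant_speed {n : ℕ} (U : Set (Fin n → ℝ)) (hU : IsOpen U)
    (g : (Fin n → ℝ) → ((Fin n → ℝ) →L[ℝ] (Fin n → ℝ) →L[ℝ] ℝ))
    (hg : ContDiffOn ℝ (⊤ : ℕ∞) g U)
    (hsymm : ∀ q ∈ U, ∀ u w : Fin n → ℝ, g q u w = g q w u)
    (hnondeg : ∀ q ∈ U, ∀ u : Fin n → ℝ, (∀ w, g q u w = 0) → u = 0)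
    (ginv : (Fin n → ℝ) → Fin n → Fin n → ℝ)
    (hginv : ∀ q ∈ U, ∀ i j : Fin n,
      (∑ k, g q (basisVec i) (basisVec k) * ginv q k j) = if i = j then 1 else 0)
    (α : (Fin n → ℝ) × (Fin n → ℝ) → ((Fin n → ℝ) →L[ℝ] ℝ))
    (hcontact : ∀ (q : Fin n → ℝ), q ∈ U → ∀ v : Fin n → ℝ, α (q, v) v = 0)
    (I : Set ℝ) (hI : IsOpen I) (hI' : I.OrdConnected)
    (x x' x'' : ℝ → (Fin n → ℝ))
    (hxU : ∀ t ∈ I, x t ∈ U)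
    (hx' : ∀ t ∈ I, HasDerivAt x (x' t) t)
    (hx'' : ∀ t ∈ I, HasDerivAt x' (x'' t) t)
    (hNewton : ∀ t ∈ I, ∀ l : Fin n,
      x'' t l = -((∑ k, ginv (x t) l k * α (x t, x' t) (basisVec k))
        + ∑ i, ∑ j, christoffel g ginv l i j (x t) * x' t i * x' t j)) :
    ∀ t₁ ∈ I, ∀ t₂ ∈ I,
      g (x t₁) (x' t₁) (x' t₁) = g (x t₂) (x' t₂) (x' t₂) := by
  intro t₁ ht₁ t₂ ht₂
  have key : ∀ t ∈ I, HasDerivAt (fun s => g (x s) (x' s) (x' s)) (0:ℝ) t := by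
    intro t ht
    have hqU := hxU t ht
    have hgd : DifferentiableAt ℝ g (x t) :=
      (hg.differentiableOn (by simp)).differentiableAt (hU.mem_nhds hqU)
    have h1 : HasDerivAt (fun s => g (x s)) (fderiv ℝ g (x t) (x' t)) t :=
      hgd.hasFDerivAt.comp_hasDerivAt (l := g) t (hx' t ht)
    have h2 := h1.clm_apply (hx'' t ht)
    have h3 := h2.clm_apply (hx'' t ht)
    have hNewt' : ∀ l, x'' t l = -((∑ k, ginv (x t) l k * α (x t, x' t) (basisVec k))
        + ∑ i, ∑ j, ((1/2) * ∑ k, ginv (x t) l k *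
            (fderiv ℝ g (x t) (basisVec i) (basisVec j) (basisVec k)
              + fderiv ℝ g (x t) (basisVec j) (basisVec i) (basisVec k)
              - fderiv ℝ g (x t) (basisVec k) (basisVec i) (basisVec j)))
          * x' t i * x' t j) := by
      intro l
      rw [hNewton t ht l]
      simp only [christoffel, fderiv_eval g (x t) hgd]
    have hA' : (∑ m, x' t m * α (x t, x' t) (basisVec m)) = 0 := by
      rw [← clm1_expand]
      exact hcontact (x t) hqU (x' t)
    have hzero : (fderiv ℝ g (x t) (x' t) (x' t) + g (x t) (x'' t)) (x' t)
        + g (x t) (x' t) (x'' t) = 0 := by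
      rw [ContinuousLinearMap.add_apply, clm3_expand (fderiv ℝ g (x t)) (x' t) (x' t) (x' t),
        hsymm (x t) hqU (x' t) (x'' t), clm2_expand (g (x t)) (x'' t) (x' t)]
      exact algebra_core (fun i j => g (x t) (basisVec i) (basisVec j)) (ginv (x t))
        (fun m i j => fderiv ℝ g (x t) (basisVec m) (basisVec i) (basisVec j))
        (fun k => α (x t, x' t) (basisVec k)) (x' t) (x'' t)
        (fun i j => hsymm (x t) hqU _ _)
        (fun m k => hginv (x t) hqU m k)
        hA' hNewt'
    rw [hzero] at h3
    exact h3
  have hconv : Convex ℝ I := convex_iff_ordConnected.mpr hI'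
  have hdiff : DifferentiableOn ℝ (fun s => g (x s) (x' s) (x' s)) I :=
    fun t ht => ((key t ht).differentiableAt).differentiableWithinAt
  have hd0 : ∀ t ∈ I, fderivWithin ℝ (fun s => g (x s) (x' s) (x' s)) I t = 0 := by
    intro t ht
    have h0 : HasFDerivAt (fun s => g (x s) (x' s) (x' s)) (0 : ℝ →L[ℝ] ℝ) t := by
      have h := (key t ht).hasFDerivAt
      convert h using 1
      ext
      simp
      simp
    rw [fderivWithin_of_isOpen hI ht, h0.fderiv]
  exact hconv.is_const_of_fderivWithin_eq_zero hdiff hd0 ht₁ ht₂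
end
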